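/- Fix n, T with T ≥ n, and real data sequences U = (ū_0,…,ū_T), Y = (ȳ_0,…,ȳ_T). Let H ∈ ℝ^{(2n+1)×(T−n+1)} be the stacked Hankel matrix [H_n(U); H̄_n(Y)] (where H̄_n(Y) has n rows), and let b = (ȳ_n,…,ȳ_T) ∈ ℝ^{1×(T−n+1)}. Then the set Σ_{U,Y} = { v ∈ ℝ^{1×(2n+1)} : v H' = b }, where H' = [H_n(U); H̄_n(Y)], is a singleton if and only if rank [H_n(U); H̄_n(Y)] = rank [H_n(U); H_n(Y)] = 2n+1. -/

import Mathlib

open Matrix Submodule Module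

lemma rank_eq_finrank_span_rows {m κ : Type*} [Fintype m] [Fintype κ]
    (M : Matrix m κ ℝ) : M.rank = finrank ℝ (span ℝ (Set.range M)) := by
  rw [← Matrix.rank_transpose, Matrix.rank, Matrix.mulVecLin_transpose,
    range_vecMulLinear]
  rfl

theorem stmt_4 (n T : ℕ) (hT : n ≤ T) (U Y : Fin (T + 1) → ℝ) :
    (∃! v : Fin (n + 1) ⊕ Fin n → ℝ,
        v ᵥ* Matrix.fromRows
            (Matrix.of fun (i : Fin (n + 1)) (j : Fin (T - n + 1)) =>
              U ⟨i.1 + j.1, by omega⟩)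
            (Matrix.of fun (i : Fin n) (j : Fin (T - n + 1)) =>
              Y ⟨i.1 + j.1, by omega⟩)
          = fun j : Fin (T - n + 1) => Y ⟨n + j.1, by omega⟩) ↔
      ((Matrix.fromRows
            (Matrix.of fun (i : Fin (n + 1)) (j : Fin (T - n + 1)) =>
              U ⟨i.1 + j.1, by omega⟩)
            (Matrix.of fun (i : Fin n) (j : Fin (T - n + 1)) =>
              Y ⟨i.1 + j.1, by omega⟩)).rank = 2 * n + 1 ∧
        (Matrix.fromRows
            (Matrix.of fun (i : Fin (n + 1)) (j : Fin (T - n + 1)) =>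
              U ⟨i.1 + j.1, by omega⟩)
            (Matrix.of fun (i : Fin (n + 1)) (j : Fin (T - n + 1)) =>
              Y ⟨i.1 + j.1, by omega⟩)).rank = 2 * n + 1) := by
  set A : Matrix (Fin (n + 1) ⊕ Fin n) (Fin (T - n + 1)) ℝ :=
    Matrix.fromRows
      (Matrix.of fun (i : Fin (n + 1)) (j : Fin (T - n + 1)) =>
        U ⟨i.1 + j.1, by omega⟩)
      (Matrix.of fun (i : Fin n) (j : Fin (T - n + 1)) =>
        Y ⟨i.1 + j.1, by omega⟩) with hA
  set B : Matrix (Fin (n + 1) ⊕ Fin (n + 1)) (Fin (T - n + 1)) ℝ :=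
    Matrix.fromRows
      (Matrix.of fun (i : Fin (n + 1)) (j : Fin (T - n + 1)) =>
        U ⟨i.1 + j.1, by omega⟩)
      (Matrix.of fun (i : Fin (n + 1)) (j : Fin (T - n + 1)) =>
        Y ⟨i.1 + j.1, by omega⟩) with hB
  set b : Fin (T - n + 1) → ℝ := fun j => Y ⟨n + j.1, by omega⟩ with hb
  have hrangeB : Set.range B = insert b (Set.range A) := by
    ext r
    constructor
    · rintro ⟨i, rfl⟩
      rcases i with i | i
      · exact Or.inr ⟨Sum.inl i, rfl⟩
      · rcases Nat.lt_or_ge i.1 n with h | h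
        · refine Or.inr ⟨Sum.inr ⟨i.1, h⟩, ?_⟩
          ext j; simp [hA, hB]
        · have : i.1 = n := by omega
          refine Or.inl ?_
          ext j; simp [hB, hb, this]
    · rintro (rfl | ⟨i, rfl⟩)
      · exact ⟨Sum.inr ⟨n, by omega⟩, by ext j; simp [hB, hb]⟩
      · rcases i with i | i
        · exact ⟨Sum.inl i, rfl⟩
        · exact ⟨Sum.inr ⟨i.1, by omega⟩, by ext j; simp [hA, hB]⟩
  have hcard : Fintype.card (Fin (n + 1) ⊕ Fin n) = 2 * n + 1 := by
    simp; omega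
  -- rank A = 2n+1 ↔ vecMulLinear injective
  have hrn := LinearMap.finrank_range_add_finrank_ker A.vecMulLinear
  have hdom : finrank ℝ ((Fin (n + 1) ⊕ Fin n) → ℝ) = 2 * n + 1 := by
    rw [Module.finrank_pi]; exact hcard
  have hrankA : A.rank = finrank ℝ (LinearMap.range A.vecMulLinear) := by
    rw [← Matrix.rank_transpose, Matrix.rank, Matrix.mulVecLin_transpose]
  have hinj : A.rank = 2 * n + 1 ↔ Function.Injective A.vecMulLinear := by
    rw [hrankA]
    constructor
    · intro h
      rw [← LinearMap.ker_eq_bot, ← Submodule.finrank_eq_zero]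
      omega
    · intro h
      rw [← LinearMap.ker_eq_bot, ← Submodule.finrank_eq_zero] at h
      omega
  have hmem : (∃ v, v ᵥ* A = b) ↔ b ∈ span ℝ (Set.range A) := by
    show (∃ v, v ᵥ* A = b) ↔ b ∈ span ℝ (Set.range A.row)
    rw [← range_vecMulLinear]
    constructor
    · rintro ⟨v, hv⟩; exact ⟨v, hv⟩
    · rintro ⟨v, hv⟩; exact ⟨v, hv⟩
  constructor
  · rintro ⟨v₀, hv₀, huniq⟩
    have hinj' : Function.Injective A.vecMulLinear := by
      intro v w hvw
      have h1 : (v - w + v₀) ᵥ* A = b := by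
        simp only [Matrix.vecMulLinear_apply] at hvw
        rw [Matrix.add_vecMul, Matrix.sub_vecMul, hvw, hv₀]
        simp
      have := huniq _ h1
      have h2 : v - w = 0 := by
        have := congrArg (fun x => x - v₀) this
        simpa using this
      have := sub_eq_zero.mp h2
      exact this
    have hA1 : A.rank = 2 * n + 1 := hinj.mpr hinj'
    refine ⟨hA1, ?_⟩
    have hbmem : b ∈ span ℝ (Set.range A) := hmem.mp ⟨v₀, hv₀⟩
    have : span ℝ (Set.range B) = span ℝ (Set.range A) := by
      rw [hrangeB]
      refine le_antisymm (Submodule.span_le.mpr ?_) (Submodule.span_mono (Set.subset_insert _ _))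
      rintro r (rfl | hr)
      · exact hbmem
      · exact Submodule.subset_span hr
    rw [rank_eq_finrank_span_rows, this, ← rank_eq_finrank_span_rows, hA1]
  · rintro ⟨hA1, hB1⟩
    have hinj' := hinj.mp hA1
    have hle : span ℝ (Set.range A) ≤ span ℝ (Set.range B) := by
      rw [hrangeB]; exact Submodule.span_mono (Set.subset_insert _ _)
    have heq : span ℝ (Set.range A) = span ℝ (Set.range B) := by
      apply Submodule.eq_of_le_of_finrank_le hle
      rw [← rank_eq_finrank_span_rows, ← rank_eq_finrank_span_rows, hA1, hB1]
    have hbmem : b ∈ span ℝ (Set.range A) := by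
      rw [heq]
      exact Submodule.subset_span (hrangeB ▸ Set.mem_insert _ _)
    obtain ⟨v, hv⟩ := hmem.mpr hbmem
    refine ⟨v, hv, fun w hw => hinj' ?_⟩
    simp only [Matrix.vecMulLinear_apply, hv, hw]
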